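/- Let n ≥ 2, and let A be an n-by-n symmetric positive semidefinite (resp. positive definite) real matrix with nonnegative entries. Then for every real number t ≥ n − 2 (t > 0 if n = 2), the Hadamard power A^{∘t} is positive semidefinite (resp. positive definite). -/

import Mathlib

/-- `A` is totally nonnegative of order `r`: every minor of size at most `r` is nonnegative. -/
def IsTNr {m n : ℕ} (A : Matrix (Fin m) (Fin n) ℝ) (r : ℕ) : Prop :=
  ∀ (k : ℕ), k ≤ r → ∀ (f : Fin k → Fin m) (g : Fin k → Fin n),
    StrictMono f → StrictMono g → 0 ≤ (A.submatrix f g).det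

/-- `A` is totally positive of order `r`: every minor of size at most `r` is positive. -/
def IsTPr {m n : ℕ} (A : Matrix (Fin m) (Fin n) ℝ) (r : ℕ) : Prop :=
  ∀ (k : ℕ), k ≤ r → ∀ (f : Fin k → Fin m) (g : Fin k → Fin n),
    StrictMono f → StrictMono g → 0 < (A.submatrix f g).det

/-- The contiguous `k`-by-`k` submatrix of `A` with rows `a, a+1, …, a+k-1`
and columns `b, b+1, …, b+k-1`. -/
def ctgSub {m n : ℕ} (A : Matrix (Fin m) (Fin n) ℝ) (k a b : ℕ)
    (ha : a + k ≤ m) (hb : b + k ≤ n) : Matrix (Fin k) (Fin k) ℝ :=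
  Matrix.of fun i j => A ⟨a + i.1, by omega⟩ ⟨b + j.1, by omega⟩

/-- `A` is a Hankel matrix: the entry `A i j` depends only on `i + j`. -/
def IsHankel {m n : ℕ} (A : Matrix (Fin m) (Fin n) ℝ) : Prop :=
  ∀ (i i' : Fin m) (j j' : Fin n), i.1 + j.1 = i'.1 + j'.1 → A i j = A i' j'

/-- The Hadamard (entrywise) power `A^{∘t}` with real exponent `t` (via `Real.rpow`). -/
noncomputable def hadPow {m n : ℕ} (A : Matrix (Fin m) (Fin n) ℝ) (t : ℝ) :
    Matrix (Fin m) (Fin n) ℝ :=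
  Matrix.of fun i j => (A i j) ^ t

open Matrix

/-- quadratic form -/
def qf {N : ℕ} (M : Matrix (Fin N) (Fin N) ℝ) (x : Fin N → ℝ) : ℝ :=
  ∑ i, ∑ j, x i * M i j * x j

lemma qf_eq {N : ℕ} (M : Matrix (Fin N) (Fin N) ℝ) (x : Fin N → ℝ) :
    dotProduct (star x) (M *ᵥ x) = qf M x := by
  simp [dotProduct, mulVec, qf, Finset.mul_sum, mul_assoc]

lemma posSemidef_of_qf {N : ℕ} {M : Matrix (Fin N) (Fin N) ℝ}
    (h1 : M.IsHermitian) (h2 : ∀ x, 0 ≤ qf M x) : M.PosSemidef :=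
  PosSemidef.of_dotProduct_mulVec_nonneg h1 fun x => by rw [qf_eq]; exact h2 x

lemma qf_nonneg {N : ℕ} {M : Matrix (Fin N) (Fin N) ℝ} (hM : M.PosSemidef) (x : Fin N → ℝ) :
    0 ≤ qf M x := by rw [← qf_eq]; exact hM.dotProduct_mulVec_nonneg x

lemma herm_apply {N : ℕ} {M : Matrix (Fin N) (Fin N) ℝ} (h : M.IsHermitian) (i j : Fin N) :
    M j i = M i j := by
  have := congrFun (congrFun h j) i
  simpa [conjTranspose_apply] using this.symm

lemma vecMulVec_posSemidef {N : ℕ} (v : Fin N → ℝ) : (vecMulVec v v).PosSemidef := by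
  refine posSemidef_of_qf ?_ fun x => ?_
  · ext i j; simp [conjTranspose_apply, vecMulVec_apply, mul_comm]
  · have : qf (vecMulVec v v) x = (∑ i, v i * x i) ^ 2 := by
      simp only [qf, vecMulVec_apply, sq, Finset.sum_mul, Finset.mul_sum]
      apply Finset.sum_congr rfl; intro i _
      apply Finset.sum_congr rfl; intro j _
      ring
    rw [this]; positivity

/-- Schur product theorem. -/
lemma schur_psd {N : ℕ} {M P : Matrix (Fin N) (Fin N) ℝ}
    (hM : M.PosSemidef) (hP : P.PosSemidef) : (M ⊙ P).PosSemidef := by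
  obtain ⟨m, v, hv⟩ := Matrix.posSemidef_iff_eq_sum_vecMulVec.mp hP
  obtain ⟨B, hB⟩ : ∃ B : Matrix (Fin m) (Fin N) ℝ, P = Bᴴ * B :=
    ⟨Matrix.of fun k i => v k i, by
      ext i j; simp [hv, Matrix.mul_apply, vecMulVec_apply, Matrix.sum_apply]⟩
  refine posSemidef_of_qf ?_ fun x => ?_
  · ext i j
    simp only [conjTranspose_apply, hadamard_apply, star_trivial]
    rw [herm_apply hM.1, herm_apply hP.1]
  · have key : qf (M ⊙ P) x = ∑ k, qf M (fun i => x i * B k i) := by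
      have hPij : ∀ i j, P i j = ∑ k, B k i * B k j := by
        intro i j
        rw [hB]
        simp [Matrix.mul_apply, conjTranspose_apply]
      calc qf (M ⊙ P) x = ∑ i, ∑ j, ∑ k, (x i * B k i) * M i j * (x j * B k j) := by
            apply Finset.sum_congr rfl; intro i _
            apply Finset.sum_congr rfl; intro j _
            rw [hadamard_apply, hPij]
            simp only [Finset.mul_sum, Finset.sum_mul]
            apply Finset.sum_congr rfl; intro k _
            ring
        _ = ∑ i, ∑ k, ∑ j, (x i * B k i) * M i j * (x j * B k j) := by
            apply Finset.sum_congr rfl; intro i _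
            exact Finset.sum_comm
        _ = ∑ k, ∑ i, ∑ j, (x i * B k i) * M i j * (x j * B k j) := Finset.sum_comm
        _ = ∑ k, qf M (fun i => x i * B k i) := rfl
    rw [key]
    exact Finset.sum_nonneg fun k _ => qf_nonneg hM _

lemma cont_rpow_aux (c d q : ℝ) (hq : 0 ≤ q) : Continuous fun s : ℝ => (c + s * d) ^ q := by
  rcases eq_or_lt_of_le hq with h | h
  · simp only [← h, Real.rpow_zero]; exact continuous_const
  · refine continuous_iff_continuousAt.mpr fun s => ?_
    exact (Real.continuousAt_rpow_const _ _ (Or.inr hq)).comp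
      (by continuity : Continuous fun s : ℝ => c + s * d).continuousAt

lemma rpow_sub_rpow_integral {a b t : ℝ} (ht : 1 ≤ t) :
    a ^ t - b ^ t = ∫ s in (0:ℝ)..1, t * (a - b) * (b + s * (a - b)) ^ (t - 1) := by
  have hderiv : ∀ s ∈ Set.uIcc (0:ℝ) 1,
      HasDerivAt (fun s : ℝ => (b + s * (a - b)) ^ t)
        (t * (a - b) * (b + s * (a - b)) ^ (t - 1)) s := by
    intro s _
    have h1 : HasDerivAt (fun s : ℝ => b + s * (a - b)) (a - b) s := by
      simpa using ((hasDerivAt_id s).mul_const (a - b)).const_add b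
    have h2 := (Real.hasDerivAt_rpow_const (x := b + s * (a - b)) (p := t) (Or.inr ht)).comp s h1
    rw [show t * (a - b) * (b + s * (a - b)) ^ (t - 1) = t * (b + s * (a - b)) ^ (t - 1) * (a - b) by ring]
    exact h2
  have hint : IntervalIntegrable
      (fun s : ℝ => t * (a - b) * (b + s * (a - b)) ^ (t - 1)) MeasureTheory.volume 0 1 :=
    (Continuous.intervalIntegrable (by
      exact (continuous_const.mul (cont_rpow_aux b (a - b) (t - 1) (by linarith))))) _ _
  have := intervalIntegral.integral_eq_sub_of_hasDerivAt hderiv hint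
  rw [this]
  norm_num

lemma sum_two {N : ℕ} {i j : Fin N} (hij : i ≠ j) (v : Fin N → ℝ)
    (hv : ∀ k, k ≠ i → k ≠ j → v k = 0) : ∑ k, v k = v i + v j := by
  rw [← Finset.sum_pair hij]
  exact (Finset.sum_subset (Finset.subset_univ _) (fun k _ hk => by
    simp only [Finset.mem_insert, Finset.mem_singleton, not_or] at hk
    exact hv k hk.1 hk.2)).symm

lemma qf_two {N : ℕ} (A : Matrix (Fin N) (Fin N) ℝ) {i j : Fin N} (hij : i ≠ j) (p q : ℝ) :
    qf A (fun k => if k = i then p else if k = j then q else 0) =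
      p * A i i * p + p * A i j * q + q * A j i * p + q * A j j * q := by
  unfold qf
  rw [sum_two hij _ (fun k hk1 hk2 => by
    apply Finset.sum_eq_zero; intro l _; simp [hk1, hk2])]
  rw [sum_two hij _ (fun l hl1 hl2 => by simp [hl1, hl2]),
      sum_two hij _ (fun l hl1 hl2 => by simp [hl1, hl2])]
  simp [hij, hij.symm]
  ring

lemma psd_entry_zero {N : ℕ} {A : Matrix (Fin N) (Fin N) ℝ} (hA : A.PosSemidef)
    {i j : Fin N} (hj : A j j = 0) : A i j = 0 := by
  by_cases hij : i = j
  · rw [hij, hj]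
  · by_contra hne
    have hsym := herm_apply hA.1 i j
    have key : ∀ q : ℝ, 0 ≤ A i i + 2 * q * A i j := by
      intro q
      have := qf_nonneg hA (fun k => if k = i then 1 else if k = j then q else 0)
      rw [qf_two A hij 1 q] at this
      rw [hsym, hj] at this
      linarith
    have h1 := key (-(A i i + 1) / (2 * A i j))
    have h2 : A i i + 2 * (-(A i i + 1) / (2 * A i j)) * A i j = -1 := by
      field_simp
      ring
    rw [h2] at h1
    linarith

lemma qf_last_zero {N : ℕ} (M : Matrix (Fin (N+1)) (Fin (N+1)) ℝ)
    (h1 : ∀ i, M i (Fin.last N) = 0) (h2 : ∀ j, M (Fin.last N) j = 0) (x : Fin (N+1) → ℝ) :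
    qf M x = qf (M.submatrix Fin.castSucc Fin.castSucc) (x ∘ Fin.castSucc) := by
  unfold qf
  rw [Fin.sum_univ_castSucc (n := N)]
  simp only [h2, mul_zero, zero_mul, Finset.sum_const_zero, add_zero]
  apply Finset.sum_congr rfl
  intro i _
  rw [Fin.sum_univ_castSucc (n := N)]
  simp [h1]

lemma psd_conv {N : ℕ} {P A : Matrix (Fin N) (Fin N) ℝ} (hP : P.PosSemidef)
    (hA : A.PosSemidef) {s : ℝ} (h0 : 0 ≤ s) (h1 : s ≤ 1) :
    (Matrix.of fun i j => P i j + s * (A i j - P i j)).PosSemidef := by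
  refine posSemidef_of_qf ?_ fun x => ?_
  · ext i j
    simp only [conjTranspose_apply, Matrix.of_apply, star_trivial,
      herm_apply hP.1 i j, herm_apply hA.1 i j]
  · have key : qf (Matrix.of fun i j => P i j + s * (A i j - P i j)) x
        = (1 - s) * qf P x + s * qf A x := by
      unfold qf
      simp only [Matrix.of_apply, Finset.mul_sum]
      rw [← Finset.sum_add_distrib]
      apply Finset.sum_congr rfl; intro i _
      rw [← Finset.sum_add_distrib]
      apply Finset.sum_congr rfl; intro j _
      ring
    rw [key]
    have := qf_nonneg hP x; have := qf_nonneg hA x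
    nlinarith

lemma hadPow_isHermitian {N : ℕ} {A : Matrix (Fin N) (Fin N) ℝ} (hA : A.IsHermitian)
    (t : ℝ) : (hadPow A t).IsHermitian := by
  ext i j
  simp only [conjTranspose_apply, hadPow, Matrix.of_apply, star_trivial, herm_apply hA i j]

def bf {N : ℕ} (M : Matrix (Fin N) (Fin N) ℝ) (x y : Fin N → ℝ) : ℝ :=
  ∑ i, ∑ j, x i * M i j * y j

lemma qf_add {N : ℕ} (A : Matrix (Fin N) (Fin N) ℝ) (x y : Fin N → ℝ) :
    qf A (x + y) = qf A x + bf A x y + bf A y x + qf A y := by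
  unfold qf bf
  simp only [Pi.add_apply, ← Finset.sum_add_distrib]
  apply Finset.sum_congr rfl; intro i _
  apply Finset.sum_congr rfl; intro j _
  ring

lemma bf_single_right {N : ℕ} (A : Matrix (Fin N) (Fin N) ℝ) (x : Fin N → ℝ) (q : ℝ)
    (L : Fin N) : bf A x (q • (Pi.single L 1 : Fin N → ℝ)) = q * ∑ i, x i * A i L := by
  unfold bf
  rw [Finset.mul_sum]
  apply Finset.sum_congr rfl; intro i _
  simp [Pi.single_apply, mul_ite, mul_one, mul_zero, Finset.sum_ite_eq']
  ring

lemma bf_single_left {N : ℕ} (A : Matrix (Fin N) (Fin N) ℝ) (x : Fin N → ℝ) (q : ℝ)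
    (L : Fin N) : bf A (q • (Pi.single L 1 : Fin N → ℝ)) x = q * ∑ j, A L j * x j := by
  unfold bf
  rw [Finset.mul_sum]
  rw [Finset.sum_comm]
  apply Finset.sum_congr rfl; intro j _
  simp [Pi.single_apply, ite_mul, mul_ite, one_mul, zero_mul, mul_one, mul_zero,
    Finset.sum_ite_eq']
  ring

lemma qf_single {N : ℕ} (A : Matrix (Fin N) (Fin N) ℝ) (q : ℝ) (L : Fin N) :
    qf A (q • (Pi.single L 1 : Fin N → ℝ)) = q * q * A L L := by
  unfold qf
  simp [Pi.single_apply, ite_mul, mul_ite, one_mul, zero_mul, mul_one, mul_zero,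
    Finset.sum_ite_eq', Finset.sum_ite_eq]
  ring

/-- Cauchy–Schwarz style: subtracting the scaled last column rank-one part stays psd. -/
lemma psd_sub_rank_one {N : ℕ} {A : Matrix (Fin (N+1)) (Fin (N+1)) ℝ} (hA : A.PosSemidef)
    (hd : 0 < A (Fin.last N) (Fin.last N)) :
    (Matrix.of fun i j => A i j -
      (A i (Fin.last N) / Real.sqrt (A (Fin.last N) (Fin.last N)))
        * (A j (Fin.last N) / Real.sqrt (A (Fin.last N) (Fin.last N)))).PosSemidef := by
  set L := Fin.last N
  set d := A L L with hdd
  refine posSemidef_of_qf ?_ fun x => ?_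
  · ext i j
    simp only [conjTranspose_apply, Matrix.of_apply, star_trivial, herm_apply hA.1 i j]
    ring
  · set β := ∑ i, x i * A i L with hβ
    have hCS : β ^ 2 ≤ d * qf A x := by
      have hq : ∀ q : ℝ, 0 ≤ d * (q * q) + (2 * β) * q + qf A x := by
        intro q
        have h := qf_nonneg hA (x + q • (Pi.single L 1 : Fin (N+1) → ℝ))
        rw [qf_add, bf_single_right, bf_single_left, qf_single] at h
        have hrow : ∑ j, A L j * x j = β := by
          rw [hβ]; apply Finset.sum_congr rfl; intro j _
          rw [herm_apply hA.1 j L]; ring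
        rw [hrow] at h
        linarith
      have := discrim_le_zero hq
      rw [discrim] at this
      nlinarith
    have hqfP : qf (Matrix.of fun i j => A i j - (A i L / Real.sqrt d) * (A j L / Real.sqrt d)) x
        = qf A x - β ^ 2 / d := by
      unfold qf
      have hs : Real.sqrt d * Real.sqrt d = d := Real.mul_self_sqrt hd.le
      have hterm : ∀ i j : Fin (N+1),
          x i * ((Matrix.of fun i j => A i j - (A i L / Real.sqrt d) * (A j L / Real.sqrt d)) i j) * x j
          = x i * A i j * x j - (x i * A i L) * (x j * A j L) / d := by
        intro i j
        simp only [Matrix.of_apply]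
        rw [div_mul_div_comm, hs]
        ring
      simp only [hterm, Finset.sum_sub_distrib]
      congr 1
      simp only [← Finset.sum_div]
      rw [hβ, sq, Finset.sum_mul_sum]
    rw [hqfP]
    have h2 : β ^ 2 / d ≤ qf A x := by
      rw [div_le_iff₀ hd]
      nlinarith [hCS]
    linarith

lemma psd2_aux {a' b' c' u v : ℝ} (ha' : 0 ≤ a') (hb' : 0 ≤ b') (hc' : 0 ≤ c')
    (hb2 : b' * b' ≤ a' * c') : 0 ≤ a' * (u * u) + 2 * b' * (u * v) + c' * (v * v) := by
  have hbsc : b' ≤ Real.sqrt a' * Real.sqrt c' := by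
    rw [← Real.sqrt_mul_self hb', ← Real.sqrt_mul ha']
    exact Real.sqrt_le_sqrt hb2
  have ha2 := Real.sq_sqrt ha'
  have hc2 := Real.sq_sqrt hc'
  rcases le_total 0 (u * v) with huv | huv
  · have : 0 ≤ 2 * b' * (u * v) := by positivity
    nlinarith [mul_self_nonneg u, mul_self_nonneg v]
  · nlinarith [sq_nonneg (Real.sqrt a' * u + Real.sqrt c' * v),
      sq_nonneg (Real.sqrt a' * u - Real.sqrt c' * v),
      mul_nonneg (sub_nonneg.mpr hbsc) (neg_nonneg.mpr huv)]

theorem main_psd : ∀ (m : ℕ) (A : Matrix (Fin m) (Fin m) ℝ), (∀ i j, 0 ≤ A i j) →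
    A.PosSemidef → ∀ t : ℝ, 0 < t → (m : ℝ) - 2 ≤ t → (hadPow A t).PosSemidef := by
  intro m
  induction m using Nat.strong_induction_on with
  | _ m IH =>
  rcases m with _ | _ | _ | M
  · intro A h0 hA t ht0 ht
    refine posSemidef_of_qf ?_ fun x => ?_
    · ext i j; exact i.elim0
    · simp [qf]
  · intro A h0 hA t ht0 ht
    refine posSemidef_of_qf (hadPow_isHermitian hA.1 t) fun x => ?_
    have h00 : (0:ℝ) ≤ (A 0 0) ^ t := Real.rpow_nonneg (h0 0 0) t
    simp only [qf, Fin.sum_univ_succ, Fin.sum_univ_zero, hadPow, Matrix.of_apply, add_zero]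
    nlinarith [mul_self_nonneg (x 0)]
  · -- 2x2 base case
    intro A h0 hA t ht0 ht
    have h10 : A 1 0 = A 0 1 := herm_apply hA.1 0 1
    have hb2 : A 0 1 * A 0 1 ≤ A 0 0 * A 1 1 := by
      have hq : ∀ s : ℝ, 0 ≤ A 1 1 * (s * s) + (2 * A 0 1) * s + A 0 0 := by
        intro s
        have h := qf_nonneg hA (fun k => if k = 0 then 1 else if k = 1 then s else 0)
        rw [qf_two A (by decide) 1 s, h10] at h
        linarith
      have := discrim_le_zero hq
      rw [discrim] at this
      nlinarith
    refine posSemidef_of_qf (hadPow_isHermitian hA.1 t) fun x => ?_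
    have key : qf (hadPow A t) x = (A 0 0) ^ t * (x 0 * x 0)
        + 2 * (A 0 1) ^ t * (x 0 * x 1) + (A 1 1) ^ t * (x 1 * x 1) := by
      simp only [qf, Fin.sum_univ_succ, Fin.sum_univ_zero, Fin.succ_zero_eq_one, hadPow,
        Matrix.of_apply, add_zero, h10]
      ring
    rw [key]
    refine psd2_aux (Real.rpow_nonneg (h0 0 0) t) (Real.rpow_nonneg (h0 0 1) t)
      (Real.rpow_nonneg (h0 1 1) t) ?_
    rw [← Real.mul_rpow (h0 0 1) (h0 0 1), ← Real.mul_rpow (h0 0 0) (h0 1 1)]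
    exact Real.rpow_le_rpow (mul_nonneg (h0 0 1) (h0 0 1)) hb2 ht0.le
  · -- inductive step, size M+3
    intro A h0 hA t ht0 ht
    have ht1 : 1 ≤ t := by
      have : ((M : ℝ) + 3) - 2 ≤ t := by push_cast at ht; linarith
      linarith [Nat.cast_nonneg (α := ℝ) M]
    set L : Fin (M + 3) := Fin.last (M + 2) with hL
    refine posSemidef_of_qf (hadPow_isHermitian hA.1 t) fun x => ?_
    by_cases hd : A L L = 0
    · -- last row and column vanish
      have hcol : ∀ i, A i L = 0 := fun i => psd_entry_zero hA hd
      have hrow : ∀ j, A L j = 0 := fun j => by rw [herm_apply hA.1 j L]; exact hcol j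
      have h1 : ∀ i, (hadPow A t) i L = 0 := fun i => by
        simp [hadPow, hcol i, Real.zero_rpow ht0.ne']
      have h2 : ∀ j, (hadPow A t) L j = 0 := fun j => by
        simp [hadPow, hrow j, Real.zero_rpow ht0.ne']
      rw [qf_last_zero (hadPow A t) h1 h2 x]
      have hsub : (hadPow A t).submatrix Fin.castSucc Fin.castSucc
          = hadPow (A.submatrix Fin.castSucc Fin.castSucc) t := by
        ext i j; simp [hadPow, Matrix.submatrix_apply]
      rw [hsub]
      refine qf_nonneg (IH (M + 2) (by omega) _ (fun i j => h0 _ _) (hA.submatrix _) t ht0 ?_) _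
      push_cast at ht ⊢
      linarith
    · have hdpos : 0 < A L L := lt_of_le_of_ne (h0 L L) (Ne.symm hd)
      set ξ : Fin (M + 3) → ℝ := fun i => A i L / Real.sqrt (A L L) with hξ
      have hξ0 : ∀ i, 0 ≤ ξ i := fun i => div_nonneg (h0 i L) (Real.sqrt_nonneg _)
      set P : Matrix (Fin (M + 3)) (Fin (M + 3)) ℝ := vecMulVec ξ ξ with hP
      have hP0 : ∀ i j, 0 ≤ P i j := fun i j => mul_nonneg (hξ0 i) (hξ0 j)
      have hPpsd : P.PosSemidef := vecMulVec_posSemidef ξ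
      set B : Matrix (Fin (M + 3)) (Fin (M + 3)) ℝ :=
        Matrix.of fun i j => A i j - ξ i * ξ j with hBdef
      have hBpsd : B.PosSemidef := psd_sub_rank_one hA hdpos
      have hsd : Real.sqrt (A L L) * Real.sqrt (A L L) = A L L :=
        Real.mul_self_sqrt hdpos.le
      have hξL : ξ L = Real.sqrt (A L L) := by
        rw [hξ]; exact Real.div_sqrt
      have hBcol : ∀ i, B i L = 0 := by
        intro i
        simp only [hBdef, Matrix.of_apply, hξ]
        rw [div_mul_div_comm, hsd, mul_div_assoc, div_self hd, mul_one, sub_self]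
      have hBrow : ∀ j, B L j = 0 := fun j => by
        rw [herm_apply hBpsd.1 j L]; exact hBcol j
      have hcont : ∀ p : Fin (M+3) × Fin (M+3), Continuous fun s : ℝ =>
          x p.1 * x p.2 * (t * B p.1 p.2 * (P p.1 p.2 + s * B p.1 p.2) ^ (t - 1)) := by
        intro p
        exact continuous_const.mul (continuous_const.mul
          (cont_rpow_aux (P p.1 p.2) (B p.1 p.2) (t - 1) (by linarith)))
      have key : qf (hadPow A t) x - qf (hadPow P t) x = ∫ s in (0:ℝ)..1,
          ∑ p : Fin (M+3) × Fin (M+3),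
            x p.1 * x p.2 * (t * B p.1 p.2 * (P p.1 p.2 + s * B p.1 p.2) ^ (t - 1)) := by
        have hsum : qf (hadPow A t) x - qf (hadPow P t) x
            = ∑ p : Fin (M+3) × Fin (M+3),
                x p.1 * x p.2 * ((A p.1 p.2) ^ t - (P p.1 p.2) ^ t) := by
          unfold qf
          simp only [Fintype.sum_prod_type, ← Finset.sum_sub_distrib]
          apply Finset.sum_congr rfl; intro i _
          apply Finset.sum_congr rfl; intro j _
          simp only [hadPow, Matrix.of_apply]
          ring
        rw [hsum]
        have hone : ∀ p : Fin (M+3) × Fin (M+3),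
            x p.1 * x p.2 * ((A p.1 p.2) ^ t - (P p.1 p.2) ^ t)
            = ∫ s in (0:ℝ)..1,
                x p.1 * x p.2 * (t * B p.1 p.2 * (P p.1 p.2 + s * B p.1 p.2) ^ (t - 1)) := by
          intro p
          rw [intervalIntegral.integral_const_mul]
          have hab : B p.1 p.2 = A p.1 p.2 - P p.1 p.2 := by
            simp [hBdef, hP, vecMulVec_apply]
          rw [hab, ← rpow_sub_rpow_integral ht1]
        rw [Finset.sum_congr rfl (fun p _ => hone p)]
        rw [← intervalIntegral.integral_finset_sum
          (fun p _ => ((hcont p).intervalIntegrable _ _))]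
      have hint_nn : (0:ℝ) ≤ ∫ s in (0:ℝ)..1,
          ∑ p : Fin (M+3) × Fin (M+3),
            x p.1 * x p.2 * (t * B p.1 p.2 * (P p.1 p.2 + s * B p.1 p.2) ^ (t - 1)) := by
        apply intervalIntegral.integral_nonneg zero_le_one
        intro s hs
        set E : Matrix (Fin (M+3)) (Fin (M+3)) ℝ :=
          Matrix.of fun i j => B i j * (P i j + s * B i j) ^ (t - 1) with hE
        have hgE : ∑ p : Fin (M+3) × Fin (M+3),
            x p.1 * x p.2 * (t * B p.1 p.2 * (P p.1 p.2 + s * B p.1 p.2) ^ (t - 1))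
            = t * qf E x := by
          simp only [qf, hE, Matrix.of_apply, Fintype.sum_prod_type, Finset.mul_sum]
          apply Finset.sum_congr rfl; intro i _
          apply Finset.sum_congr rfl; intro j _
          ring
        rw [hgE]
        have hEcol : ∀ i, E i L = 0 := fun i => by simp [hE, hBcol i]
        have hErow : ∀ j, E L j = 0 := fun j => by simp [hE, hBrow j]
        rw [qf_last_zero E hEcol hErow]
        set A' : Matrix (Fin (M+2)) (Fin (M+2)) ℝ :=
          A.submatrix Fin.castSucc Fin.castSucc with hA'
        set P' : Matrix (Fin (M+2)) (Fin (M+2)) ℝ :=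
          P.submatrix Fin.castSucc Fin.castSucc with hP'
        set C' : Matrix (Fin (M+2)) (Fin (M+2)) ℝ :=
          Matrix.of fun i j => P' i j + s * (A' i j - P' i j) with hC'
        have hEsub : E.submatrix Fin.castSucc Fin.castSucc
            = (B.submatrix Fin.castSucc Fin.castSucc) ⊙ (hadPow C' (t - 1)) := by
          ext i j
          simp only [hE, hC', hA', hP', Matrix.submatrix_apply, Matrix.of_apply,
            Matrix.hadamard_apply, hadPow, hBdef, hP, vecMulVec_apply]
        rw [hEsub]
        have hC'psd : C'.PosSemidef := psd_conv (hPpsd.submatrix _) (hA.submatrix _) hs.1 hs.2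
        have hC'0 : ∀ i j, 0 ≤ C' i j := by
          intro i j
          simp only [hC', hA', hP', Matrix.of_apply, Matrix.submatrix_apply]
          nlinarith [hP0 (Fin.castSucc i) (Fin.castSucc j),
            h0 (Fin.castSucc i) (Fin.castSucc j), hs.1, hs.2]
        have hD : (hadPow C' (t - 1)).PosSemidef := by
          rcases eq_or_lt_of_le (by linarith : (0:ℝ) ≤ t - 1) with h | h
          · have : hadPow C' (t - 1) = vecMulVec (fun _ => 1) (fun _ => 1) := by
              ext i j
              simp [hadPow, vecMulVec_apply, ← h, Real.rpow_zero]
            rw [this]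
            exact vecMulVec_posSemidef _
          · refine IH (M + 2) (by omega) C' hC'0 hC'psd (t - 1) h ?_
            push_cast at ht ⊢
            linarith
        exact mul_nonneg ht0.le (qf_nonneg (schur_psd (hBpsd.submatrix _) hD) _)
      have hPt : 0 ≤ qf (hadPow P t) x := by
        have hPv : hadPow P t = vecMulVec (fun i => ξ i ^ t) (fun i => ξ i ^ t) := by
          ext i j
          simp [hadPow, hP, vecMulVec_apply, Real.mul_rpow (hξ0 i) (hξ0 j)]
        rw [hPv]
        exact qf_nonneg (vecMulVec_posSemidef _) x
      linarith [key, hint_nn, hPt]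

lemma qf_pos {N : ℕ} {M : Matrix (Fin N) (Fin N) ℝ} (hM : M.PosDef) {x : Fin N → ℝ}
    (hx : x ≠ 0) : 0 < qf M x := by rw [← qf_eq]; exact hM.dotProduct_mulVec_pos hx

lemma qf_smul {N : ℕ} (A : Matrix (Fin N) (Fin N) ℝ) (c : ℝ) (y : Fin N → ℝ) :
    qf A (c • y) = c * c * qf A y := by
  unfold qf
  simp only [Pi.smul_apply, smul_eq_mul, Finset.mul_sum]
  apply Finset.sum_congr rfl; intro i _
  apply Finset.sum_congr rfl; intro j _
  ring

lemma exists_eps {n : ℕ} (hn : 0 < n) (A : Matrix (Fin n) (Fin n) ℝ) (hA : A.PosDef) :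
    ∃ ε : ℝ, 0 < ε ∧ ∀ x : Fin n → ℝ, ε * (∑ i, x i * x i) ≤ qf A x := by
  let E := EuclideanSpace ℝ (Fin n)
  let f : E → ℝ := fun y => qf A y
  have hf : Continuous f := by
    apply continuous_finset_sum; intro i _
    apply continuous_finset_sum; intro j _
    have h1 : Continuous fun y : E => y i := (continuous_apply i).comp (PiLp.continuous_ofLp _ _)
    have h2 : Continuous fun y : E => y j := (continuous_apply j).comp (PiLp.continuous_ofLp _ _)
    exact (h1.mul continuous_const).mul h2
  have hx₀ : (EuclideanSpace.single ⟨0, hn⟩ (1:ℝ) : E) ∈ Metric.sphere (0:E) 1 := by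
    simp [EuclideanSpace.norm_single]
  obtain ⟨z, hz, hmin⟩ := (isCompact_sphere (0:E) 1).exists_isMinOn ⟨_, hx₀⟩
    hf.continuousOn
  have hz1 : ‖z‖ = 1 := mem_sphere_zero_iff_norm.mp hz
  have hz0 : (z : Fin n → ℝ) ≠ 0 := by
    intro h
    rw [show z = 0 from by simpa using congrArg (WithLp.toLp 2) h] at hz1
    simp at hz1
  refine ⟨f z, qf_pos hA hz0, fun x => ?_⟩
  by_cases hx : x = 0
  · simp [hx, qf]
  · set Y : E := WithLp.toLp 2 x with hY
    have hYnorm : ‖Y‖ = Real.sqrt (∑ i, x i * x i) := by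
      rw [EuclideanSpace.norm_eq]
      congr 1
      apply Finset.sum_congr rfl
      intro i _
      rw [Real.norm_eq_abs, sq_abs, sq]
    have hdot_nn : 0 ≤ ∑ i, x i * x i :=
      Finset.sum_nonneg fun i _ => mul_self_nonneg (x i)
    have hYpos : 0 < ‖Y‖ := by
      rw [norm_pos_iff]
      exact fun h => hx (by simpa [hY] using congrArg WithLp.ofLp h)
    have hmem : (‖Y‖⁻¹ • Y : E) ∈ Metric.sphere (0:E) 1 := by
      simp [norm_smul, abs_of_nonneg (inv_nonneg.mpr hYpos.le), inv_mul_cancel₀ hYpos.ne']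
    have hle : f z ≤ f (‖Y‖⁻¹ • Y) := hmin hmem
    have : f (‖Y‖⁻¹ • Y) = (‖Y‖⁻¹ * ‖Y‖⁻¹) * qf A x := qf_smul A _ x
    rw [this] at hle
    have hsq : ‖Y‖ * ‖Y‖ = ∑ i, x i * x i := by
      rw [hYnorm, Real.mul_self_sqrt hdot_nn]
    have h1 : f z * (‖Y‖ * ‖Y‖) ≤ qf A x := by
      have h2 := mul_le_mul_of_nonneg_right hle (mul_nonneg hYpos.le hYpos.le)
      calc f z * (‖Y‖ * ‖Y‖) ≤ ‖Y‖⁻¹ * ‖Y‖⁻¹ * qf A x * (‖Y‖ * ‖Y‖) := h2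
        _ = qf A x := by field_simp
    rw [← hsq]
    exact h1


/-- FitzGerald–Horn, Theorem 5.4. Let `n ≥ 2` and let `A` be an
`n`-by-`n` symmetric positive semidefinite (resp. positive definite) real matrix with
nonnegative entries. Then for every real `t ≥ n - 2` (with `t > 0` when `n = 2`),
the Hadamard power `A^{∘t}` is positive semidefinite (resp. positive definite). -/
theorem hadamard_power_posSemidef_posDef {n : ℕ} (hn : 2 ≤ n)
    (A : Matrix (Fin n) (Fin n) ℝ) (h0 : ∀ i j, 0 ≤ A i j)
    (t : ℝ) (ht0 : 0 < t) (ht : (n : ℝ) - 2 ≤ t) :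
    (A.PosSemidef → (hadPow A t).PosSemidef) ∧ (A.PosDef → (hadPow A t).PosDef) := by
  constructor
  · intro hA
    exact main_psd n A h0 hA t ht0 ht
  · intro hA
    obtain ⟨ε, hε, hlow⟩ := exists_eps (by omega) A hA
    have hdiag : ∀ i, ε ≤ A i i := by
      intro i
      have h1 := hlow (Pi.single i 1)
      have h2 : (∑ k, (Pi.single i 1 : Fin n → ℝ) k * (Pi.single i 1 : Fin n → ℝ) k) = 1 := by
        simp [Pi.single_apply, Finset.sum_ite_eq']
      have h3 : qf A (Pi.single i (1:ℝ)) = A i i := by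
        have := qf_single A 1 i
        simpa using this
      rw [h2, h3, mul_one] at h1
      exact h1
    set B : Matrix (Fin n) (Fin n) ℝ :=
      Matrix.of fun i j => A i j - if i = j then ε else 0 with hB
    have hB0 : ∀ i j, 0 ≤ B i j := by
      intro i j
      by_cases h : i = j
      · subst h
        simp only [hB, Matrix.of_apply, eq_self_iff_true, if_true, sub_nonneg]
        exact hdiag i
      · simp only [hB, Matrix.of_apply, if_neg h, sub_zero]; exact h0 i j
    have hBpsd : B.PosSemidef := by
      refine posSemidef_of_qf ?_ fun x => ?_
      · ext i j
        simp only [conjTranspose_apply, hB, Matrix.of_apply, star_trivial,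
          herm_apply hA.1 i j]
        congr 1
        simp [eq_comm]
      · have hrow : ∀ i, (∑ j, x i * B i j * x j)
            = (∑ j, x i * A i j * x j) - ε * (x i * x i) := by
          intro i
          have hj : ∀ j, x i * B i j * x j
              = x i * A i j * x j - (if j = i then ε * (x i * x i) else 0) := by
            intro j
            by_cases h : i = j
            · subst h
              simp only [hB, Matrix.of_apply, eq_self_iff_true, if_true]
              ring
            · simp only [hB, Matrix.of_apply, if_neg h, if_neg (Ne.symm h), sub_zero]
          rw [Finset.sum_congr rfl fun j _ => hj j, Finset.sum_sub_distrib,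
            Finset.sum_ite_eq' Finset.univ i]
          simp
        have hqfB : qf B x = qf A x - ε * ∑ i, x i * x i := by
          unfold qf
          rw [Finset.sum_congr rfl fun i _ => hrow i, Finset.sum_sub_distrib, ← Finset.mul_sum]
        rw [hqfB]
        linarith [hlow x]
    have hhadB := main_psd n B hB0 hBpsd t ht0 ht
    refine PosDef.of_dotProduct_mulVec_pos (hadPow_isHermitian hA.1 t) fun x hx => ?_
    rw [qf_eq]
    have hterm : ∀ i j : Fin n, x i * (hadPow A t) i j * x j
        = x i * (hadPow B t) i j * x j
          + (if j = i then ((A i i) ^ t - (A i i - ε) ^ t) * (x i * x i) else 0) := by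
      intro i j
      by_cases h : i = j
      · subst h
        simp only [hadPow, Matrix.of_apply, hB, eq_self_iff_true, if_true]
        ring
      · simp only [hadPow, Matrix.of_apply, hB, if_neg h, if_neg (Ne.symm h), sub_zero, add_zero]
    have hsplit : qf (hadPow A t) x = qf (hadPow B t) x
        + ∑ i, ((A i i) ^ t - (A i i - ε) ^ t) * (x i * x i) := by
      unfold qf
      rw [← Finset.sum_add_distrib]
      apply Finset.sum_congr rfl; intro i _
      rw [Finset.sum_congr rfl fun j _ => hterm i j, Finset.sum_add_distrib,
        Finset.sum_ite_eq' Finset.univ i]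
      simp
    have hpos : 0 < ∑ i, ((A i i) ^ t - (A i i - ε) ^ t) * (x i * x i) := by
      have hAii : ∀ i, 0 < A i i := by
        intro i
        have := hlow (Pi.single i 1)
        have h2 : (∑ k, (Pi.single i 1 : Fin n → ℝ) k * (Pi.single i 1 : Fin n → ℝ) k) = 1 := by
          simp [Pi.single_apply, Finset.sum_ite_eq']
        have h3 : qf A (Pi.single i (1:ℝ)) = A i i := by simpa using qf_single A 1 i
        rw [h2, h3, mul_one] at this
        linarith
      have hnn : ∀ i, 0 ≤ ((A i i) ^ t - (A i i - ε) ^ t) * (x i * x i) := by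
        intro i
        apply mul_nonneg _ (mul_self_nonneg _)
        have : (A i i - ε) ^ t ≤ (A i i) ^ t :=
          Real.rpow_le_rpow (by linarith [hdiag i]) (by linarith) ht0.le
        linarith
      obtain ⟨i, hi⟩ := Function.ne_iff.mp hx
      refine Finset.sum_pos' (fun i _ => hnn i) ⟨i, Finset.mem_univ i, ?_⟩
      apply mul_pos _ (mul_self_pos.mpr hi)
      have : (A i i - ε) ^ t < (A i i) ^ t :=
        Real.rpow_lt_rpow (by linarith [hdiag i]) (by linarith) ht0
      linarith
    rw [hsplit]
    have := qf_nonneg hhadB x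
    linarith
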